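/- (Recursion for gradient estimators under contractive compression in Byz-EF21-BC.) Suppose g_i^{t+1} = g_i^t + 𝒞_i^D(∇f_i(w^{t+1}) − g_i^t) for i ∈ 𝒢, where each 𝒞_i^D is a contractive compressor with parameter α_D applied conditionally. Then: (1/G) Σ_{i∈𝒢} E‖g_i^{t+1} − ∇f_i(x^{t+1})‖² ≤ (1 − α_D/4)·(1/G) Σ_{i∈𝒢} E‖g_i^t − ∇f_i(x^t)‖² + (8/α_D)(L±² + L²)·E‖x^{t+1} − x^t‖² + (10/α_D)(L±² + L²)·E‖x^{t+1} − w^{t+1}‖². -/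

import Mathlib

open MeasureTheory Finset

lemma young_sq {x y t : ℝ} (hx : 0 ≤ x) (hy : 0 ≤ y) (ht : 0 < t) :
    (x + y) ^ 2 ≤ (1 + t) * x ^ 2 + (1 + 1 / t) * y ^ 2 := by
  have key : t * ((1 + t) * x ^ 2 + (1 + 1 / t) * y ^ 2 - (x + y) ^ 2) = (t*x - y)^2 := by
    field_simp; ring
  nlinarith [sq_nonneg (t*x - y), sq_nonneg (t*x), mul_pos ht ht]

lemma young_norm {E : Type*} [NormedAddCommGroup E] (a b : E) {t : ℝ} (ht : 0 < t) :
    ‖a + b‖ ^ 2 ≤ (1 + t) * ‖a‖ ^ 2 + (1 + 1 / t) * ‖b‖ ^ 2 := by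
  calc ‖a + b‖ ^ 2 ≤ (‖a‖ + ‖b‖) ^ 2 := by
        apply pow_le_pow_left₀ (norm_nonneg _) (norm_add_le a b)
    _ ≤ _ := young_sq (norm_nonneg a) (norm_nonneg b) ht

lemma map_eval_pi {ι : Type*} [Fintype ι] {α : ι → Type*} [∀ i, MeasurableSpace (α i)]
    (μ : ∀ i, Measure (α i)) [∀ i, IsProbabilityMeasure (μ i)] (i : ι) :
    (Measure.pi μ).map (Function.eval i) = μ i := by
  classical
  ext s hs
  rw [Measure.map_apply (measurable_pi_apply i) hs, Set.eval_preimage, Measure.pi_pi]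
  rw [Fintype.prod_eq_single i]
  · simp
  · intro j hj; simp [Function.update_of_ne hj]

set_option maxHeartbeats 2000000 in
lemma stepB
    {d : ℕ} {ι : Type*} [Fintype ι]
    (fS : ι → EuclideanSpace ℝ (Fin d) → ℝ)
    (f : EuclideanSpace ℝ (Fin d) → ℝ)
    (L : ℝ) (hL : 0 ≤ L)
    (hsmooth : ∀ x y, ‖gradient f x - gradient f y‖ ≤ L * ‖x - y‖)
    (Lpm : ℝ) (hLpm : 0 ≤ Lpm)
    (hGH : ∀ x y, (1 / (Fintype.card ι : ℝ)) *
          ∑ i, ‖gradient (fS i) x - gradient (fS i) y‖ ^ 2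
        - ‖gradient f x - gradient f y‖ ^ 2
      ≤ Lpm ^ 2 * ‖x - y‖ ^ 2)
    (αD : ℝ) (hαD0 : 0 < αD) (hαD1 : αD ≤ 1)
    {Ωc : ι → Type*} [∀ i, MeasurableSpace (Ωc i)]
    (νc : ∀ i, Measure (Ωc i)) [∀ i, IsProbabilityMeasure (νc i)]
    (C : (i : ι) → EuclideanSpace ℝ (Fin d) → Ωc i → EuclideanSpace ℝ (Fin d))
    (hCmeas : ∀ i, Measurable fun q : EuclideanSpace ℝ (Fin d) × Ωc i => C i q.1 q.2)
    (hCint : ∀ i z, Integrable (fun wc => ‖C i z wc - z‖ ^ 2) (νc i))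
    (hCcontr : ∀ i z, ∫ wc, ‖C i z wc - z‖ ^ 2 ∂(νc i) ≤ (1 - αD) * ‖z‖ ^ 2)
    {Ω₀ : Type*} [MeasurableSpace Ω₀] (μ₀ : Measure Ω₀) [IsProbabilityMeasure μ₀]
    (xt xt1 wt1 : Ω₀ → EuclideanSpace ℝ (Fin d))
    (gt : ι → Ω₀ → EuclideanSpace ℝ (Fin d))
    (gt1 : ι → Ω₀ × (∀ i, Ωc i) → EuclideanSpace ℝ (Fin d))
    (hgt1 : ∀ i w, gt1 i w =
      gt i w.1 + C i (gradient (fS i) (wt1 w.1) - gt i w.1) (w.2 i))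
    (hint1 : ∀ i, Integrable
      (fun w : Ω₀ × (∀ i, Ωc i) => ‖gt1 i w - gradient (fS i) (xt1 w.1)‖ ^ 2)
      (μ₀.prod (Measure.pi νc)))
    (hint2 : ∀ i, Integrable
      (fun ω₀ => ‖gt i ω₀ - gradient (fS i) (xt ω₀)‖ ^ 2) μ₀)
    (hint3 : Integrable (fun ω₀ => ‖xt1 ω₀ - xt ω₀‖ ^ 2) μ₀)
    (hint4 : Integrable (fun ω₀ => ‖xt1 ω₀ - wt1 ω₀‖ ^ 2) μ₀)

    (i : ι) (ω₀ : Ω₀) :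
    (∫ w2, ‖gt1 i (ω₀, w2) - gradient (fS i) (xt1 ω₀)‖ ^ 2 ∂(Measure.pi νc))
      ≤ (1 - αD/4) * ‖gt i ω₀ - gradient (fS i) (xt ω₀)‖ ^ 2
        + (2/αD) * ‖gradient (fS i) (wt1 ω₀) - gradient (fS i) (xt ω₀)‖ ^ 2
        + (5/αD) * ‖gradient (fS i) (wt1 ω₀) - gradient (fS i) (xt1 ω₀)‖ ^ 2 := by
  obtain ⟨z, hz⟩ : ∃ z, z = gradient (fS i) (wt1 ω₀) - gt i ω₀ := ⟨_, rfl⟩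
  obtain ⟨b, hb⟩ : ∃ b, b = gradient (fS i) (wt1 ω₀) - gradient (fS i) (xt1 ω₀) := ⟨_, rfl⟩
  have hmC : Measurable fun wc : Ωc i => C i z wc :=
    (hCmeas i).comp (measurable_const.prodMk measurable_id)
  have hm : Measurable fun wc : Ωc i => ‖(C i z wc - z) + b‖ ^ 2 :=
    ((hmC.sub measurable_const).add_const b).norm.pow_const 2
  have hrew : ∀ w2 : ∀ j, Ωc j, gt1 i (ω₀, w2) - gradient (fS i) (xt1 ω₀)
      = (C i z (w2 i) - z) + b := by
    intro w2
    rw [hgt1 i (ω₀, w2)]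
    simp only [Prod.fst, Prod.snd, hz, hb]
    abel
  have hΨeq : (∫ w2, ‖gt1 i (ω₀, w2) - gradient (fS i) (xt1 ω₀)‖ ^ 2 ∂(Measure.pi νc))
      = ∫ wc, ‖(C i z wc - z) + b‖ ^ 2 ∂(νc i) := by
    simp_rw [hrew]
    rw [← map_eval_pi νc i,
      integral_map (measurable_pi_apply i).aemeasurable hm.aestronglyMeasurable]
  have hab : Integrable (fun wc => ‖(C i z wc - z) + b‖ ^ 2) (νc i) := by
    refine Integrable.mono (((hCint i z).const_mul 2).add (integrable_const (2*‖b‖^2)))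
      hm.aestronglyMeasurable ?_
    filter_upwards with wc
    have h1 := young_norm (C i z wc - z) b one_pos
    have e1 : ‖‖C i z wc - z + b‖^2‖ = ‖C i z wc - z + b‖^2 := Real.norm_of_nonneg (by positivity)
    have e2 : ‖2*‖C i z wc - z‖^2 + 2*‖b‖^2‖ = 2*‖C i z wc - z‖^2 + 2*‖b‖^2 := Real.norm_of_nonneg (by positivity)
    simp only [Pi.add_apply]
    rw [e1, e2]
    norm_num at h1
    linarith
  have hq : (0:ℝ) < αD/4 := by positivity
  have h14 : 1/(αD/4) = 4/αD := one_div_div _ _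
  have hineq1 : (∫ wc, ‖(C i z wc - z) + b‖ ^ 2 ∂(νc i))
      ≤ (1+αD/4) * ((1-αD) * ‖z‖^2) + (1+4/αD) * ‖b‖^2 := by
    have step : (∫ wc, ‖(C i z wc - z) + b‖ ^ 2 ∂(νc i))
        ≤ ∫ wc, ((1+αD/4) * ‖C i z wc - z‖^2 + (1+4/αD) * ‖b‖^2) ∂(νc i) := by
      refine integral_mono hab (((hCint i z).const_mul _).add (integrable_const _)) ?_
      intro wc
      have h2 := young_norm (C i z wc - z) b hq
      rw [h14] at h2
      exact h2
    calc (∫ wc, ‖(C i z wc - z) + b‖ ^ 2 ∂(νc i)) ≤ _ := step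
      _ = (1+αD/4) * (∫ wc, ‖C i z wc - z‖^2 ∂(νc i)) + (1+4/αD) * ‖b‖^2 := by
          rw [integral_add ((hCint i z).const_mul _) (integrable_const _),
            integral_const_mul, integral_const_mul]
          simp
      _ ≤ (1+αD/4) * ((1-αD) * ‖z‖^2) + (1+4/αD) * ‖b‖^2 := by
          have h3 := hCcontr i z
          have h4 : (0:ℝ) ≤ 1+αD/4 := by positivity
          have := mul_le_mul_of_nonneg_left h3 h4
          linarith
  have hzbound : ‖z‖^2 ≤ (1+αD/2) * ‖gt i ω₀ - gradient (fS i) (xt ω₀)‖^2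
      + (1+2/αD) * ‖gradient (fS i) (wt1 ω₀) - gradient (fS i) (xt ω₀)‖^2 := by
    have hz2 : z = (gradient (fS i) (xt ω₀) - gt i ω₀)
        + (gradient (fS i) (wt1 ω₀) - gradient (fS i) (xt ω₀)) := by rw [hz]; abel
    have hh : (0:ℝ) < αD/2 := by positivity
    have h2 := young_norm (gradient (fS i) (xt ω₀) - gt i ω₀)
      (gradient (fS i) (wt1 ω₀) - gradient (fS i) (xt ω₀)) hh
    rw [one_div_div] at h2
    rw [norm_sub_rev (gradient (fS i) (xt ω₀)) (gt i ω₀)] at h2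
    rw [hz2]
    exact h2
  -- scalar facts
  have c1 : ((1+αD/4)*(1-αD))*(1+αD/2) ≤ 1-αD/4 := by nlinarith [sq_nonneg αD, mul_nonneg hαD0.le (sq_nonneg αD)]
  have c2 : ((1+αD/4)*(1-αD))*(1+2/αD) ≤ 2/αD := by
    rw [le_div_iff₀ hαD0]
    have he : (((1+αD/4)*(1-αD))*(1+2/αD))*αD = ((1+αD/4)*(1-αD))*(αD+2) := by
      field_simp
    rw [he]
    nlinarith [sq_nonneg αD, mul_nonneg hαD0.le (sq_nonneg αD)]
  have c3 : 1+4/αD ≤ 5/αD := by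
    rw [le_div_iff₀ hαD0, add_mul, div_mul_cancel₀ _ (ne_of_gt hαD0)]
    linarith
  have hGq : (0:ℝ) ≤ ‖gt i ω₀ - gradient (fS i) (xt ω₀)‖^2 := by positivity
  have hDq : (0:ℝ) ≤ ‖gradient (fS i) (wt1 ω₀) - gradient (fS i) (xt ω₀)‖^2 := by positivity
  have hEq : (0:ℝ) ≤ ‖gradient (fS i) (wt1 ω₀) - gradient (fS i) (xt1 ω₀)‖^2 := by positivity
  have hnn : (0:ℝ) ≤ (1+αD/4)*(1-αD) := by nlinarith
  have h6 : (1+αD/4) * ((1-αD) * ‖z‖^2)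
      ≤ ((1+αD/4)*(1-αD)) * ((1+αD/2) * ‖gt i ω₀ - gradient (fS i) (xt ω₀)‖^2
        + (1+2/αD) * ‖gradient (fS i) (wt1 ω₀) - gradient (fS i) (xt ω₀)‖^2) := by
    rw [← mul_assoc]
    exact mul_le_mul_of_nonneg_left hzbound hnn
  have h7 := mul_le_mul_of_nonneg_right c1 hGq
  have h8 := mul_le_mul_of_nonneg_right c2 hDq
  have h9 := mul_le_mul_of_nonneg_right c3 hEq
  rw [hΨeq]
  have hb2 : ‖b‖^2 = ‖gradient (fS i) (wt1 ω₀) - gradient (fS i) (xt1 ω₀)‖^2 := by rw [hb]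
  rw [hb2] at hineq1
  linarith [hineq1, h6, h7, h8, h9]


set_option maxHeartbeats 2000000 in
/-- Recursion for the gradient estimators under contractive compression in Byz-EF21-BC. -/
theorem gradient_estimator_recursion_byz_ef21_bc
    {d : ℕ} {ι : Type*} [Fintype ι]
    -- local loss functions and their average
    (fS : ι → EuclideanSpace ℝ (Fin d) → ℝ)
    (f : EuclideanSpace ℝ (Fin d) → ℝ)
    (hf : ∀ x, f x = (1 / (Fintype.card ι : ℝ)) * ∑ i, fS i x)
    (hdiff : ∀ i, Differentiable ℝ (fS i))
    -- L-smoothness of f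
    (L : ℝ) (hL : 0 ≤ L)
    (hsmooth : ∀ x y, ‖gradient f x - gradient f y‖ ≤ L * ‖x - y‖)
    -- global Hessian variance
    (Lpm : ℝ) (hLpm : 0 ≤ Lpm)
    (hGH : ∀ x y, (1 / (Fintype.card ι : ℝ)) *
          ∑ i, ‖gradient (fS i) x - gradient (fS i) y‖ ^ 2
        - ‖gradient f x - gradient f y‖ ^ 2
      ≤ Lpm ^ 2 * ‖x - y‖ ^ 2)
    -- contractive compressors with parameter αD
    (αD : ℝ) (hαD0 : 0 < αD) (hαD1 : αD ≤ 1)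
    {Ωc : ι → Type*} [∀ i, MeasurableSpace (Ωc i)]
    (νc : ∀ i, Measure (Ωc i)) [∀ i, IsProbabilityMeasure (νc i)]
    (C : (i : ι) → EuclideanSpace ℝ (Fin d) → Ωc i → EuclideanSpace ℝ (Fin d))
    (hCmeas : ∀ i, Measurable fun q : EuclideanSpace ℝ (Fin d) × Ωc i => C i q.1 q.2)
    (hCint : ∀ i z, Integrable (fun wc => ‖C i z wc - z‖ ^ 2) (νc i))
    (hCcontr : ∀ i z, ∫ wc, ‖C i z wc - z‖ ^ 2 ∂(νc i) ≤ (1 - αD) * ‖z‖ ^ 2)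
    -- past randomness and random vectors
    {Ω₀ : Type*} [MeasurableSpace Ω₀] (μ₀ : Measure Ω₀) [IsProbabilityMeasure μ₀]
    (xt xt1 wt1 : Ω₀ → EuclideanSpace ℝ (Fin d))
    (gt : ι → Ω₀ → EuclideanSpace ℝ (Fin d))
    (hxtm : Measurable xt) (hxt1m : Measurable xt1) (hwt1m : Measurable wt1)
    (hgtm : ∀ i, Measurable (gt i))
    -- the new estimators: compressed gradient differences applied conditionally
    (gt1 : ι → Ω₀ × (∀ i, Ωc i) → EuclideanSpace ℝ (Fin d))
    (hgt1 : ∀ i w, gt1 i w =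
      gt i w.1 + C i (gradient (fS i) (wt1 w.1) - gt i w.1) (w.2 i))
    -- integrability of the relevant squared norms
    (hint1 : ∀ i, Integrable
      (fun w : Ω₀ × (∀ i, Ωc i) => ‖gt1 i w - gradient (fS i) (xt1 w.1)‖ ^ 2)
      (μ₀.prod (Measure.pi νc)))
    (hint2 : ∀ i, Integrable
      (fun ω₀ => ‖gt i ω₀ - gradient (fS i) (xt ω₀)‖ ^ 2) μ₀)
    (hint3 : Integrable (fun ω₀ => ‖xt1 ω₀ - xt ω₀‖ ^ 2) μ₀)
    (hint4 : Integrable (fun ω₀ => ‖xt1 ω₀ - wt1 ω₀‖ ^ 2) μ₀) :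
    (1 / (Fintype.card ι : ℝ)) *
        ∑ i, ∫ w, ‖gt1 i w - gradient (fS i) (xt1 w.1)‖ ^ 2 ∂(μ₀.prod (Measure.pi νc))
      ≤ (1 - αD / 4) * ((1 / (Fintype.card ι : ℝ)) *
            ∑ i, ∫ ω₀, ‖gt i ω₀ - gradient (fS i) (xt ω₀)‖ ^ 2 ∂μ₀)
        + (8 / αD) * (Lpm ^ 2 + L ^ 2) * ∫ ω₀, ‖xt1 ω₀ - xt ω₀‖ ^ 2 ∂μ₀
        + (10 / αD) * (Lpm ^ 2 + L ^ 2) * ∫ ω₀, ‖xt1 ω₀ - wt1 ω₀‖ ^ 2 ∂μ₀ := by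
  classical
  have hA : (0:ℝ) ≤ Lpm^2 + L^2 := by positivity
  have hI3 : 0 ≤ ∫ ω₀, ‖xt1 ω₀ - xt ω₀‖^2 ∂μ₀ := integral_nonneg fun ω₀ => by positivity
  have hI4 : 0 ≤ ∫ ω₀, ‖xt1 ω₀ - wt1 ω₀‖^2 ∂μ₀ := integral_nonneg fun ω₀ => by positivity
  rcases isEmpty_or_nonempty ι with hι | hι
  · simp only [univ_eq_empty, sum_empty, mul_zero]
    have h3 := mul_nonneg (by positivity : (0:ℝ) ≤ 8/αD*(Lpm^2+L^2)) hI3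
    have h4 := mul_nonneg (by positivity : (0:ℝ) ≤ 10/αD*(Lpm^2+L^2)) hI4
    linarith
  have hG : (0:ℝ) < (Fintype.card ι : ℝ) := by exact_mod_cast Fintype.card_pos
  have hGne : (Fintype.card ι : ℝ) ≠ 0 := ne_of_gt hG
  have hstepB := stepB fS f L hL hsmooth Lpm hLpm hGH αD hαD0 hαD1 νc C hCmeas hCint hCcontr
    μ₀ xt xt1 wt1 gt gt1 hgt1 hint1 hint2 hint3 hint4
  have hΨint : ∀ i, Integrable
      (fun ω₀ => ∫ w2, ‖gt1 i (ω₀, w2) - gradient (fS i) (xt1 ω₀)‖ ^ 2 ∂(Measure.pi νc)) μ₀ :=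
    fun i => (hint1 i).integral_prod_left
  have hsm2 : ∀ x y : EuclideanSpace ℝ (Fin d),
      ‖gradient f x - gradient f y‖^2 ≤ L^2 * ‖x-y‖^2 := by
    intro x y
    have h := pow_le_pow_left₀ (norm_nonneg _) (hsmooth x y) 2
    calc ‖gradient f x - gradient f y‖^2 ≤ (L*‖x-y‖)^2 := h
      _ = L^2*‖x-y‖^2 := by ring
  have hDsum : ∀ x y : EuclideanSpace ℝ (Fin d),
      (∑ i, ‖gradient (fS i) x - gradient (fS i) y‖^2)
        ≤ (Fintype.card ι : ℝ) * ((Lpm^2+L^2) * ‖x-y‖^2) := by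
    intro x y
    have h1 := hGH x y
    have h2 := hsm2 x y
    have h3 : (1/(Fintype.card ι : ℝ)) * ∑ i, ‖gradient (fS i) x - gradient (fS i) y‖^2
        ≤ (Lpm^2+L^2)*‖x-y‖^2 := by nlinarith
    calc (∑ i, ‖gradient (fS i) x - gradient (fS i) y‖^2)
        = (Fintype.card ι : ℝ) * ((1/(Fintype.card ι : ℝ))
          * ∑ i, ‖gradient (fS i) x - gradient (fS i) y‖^2) := by field_simp
      _ ≤ _ := mul_le_mul_of_nonneg_left h3 hG.le
  have hkey : ∀ ω₀,
      (∑ i, ∫ w2, ‖gt1 i (ω₀, w2) - gradient (fS i) (xt1 ω₀)‖ ^ 2 ∂(Measure.pi νc))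
      ≤ (1-αD/4) * ∑ i, ‖gt i ω₀ - gradient (fS i) (xt ω₀)‖^2
        + ((Fintype.card ι : ℝ) * ((8/αD)*(Lpm^2+L^2))) * ‖xt1 ω₀ - xt ω₀‖^2
        + ((Fintype.card ι : ℝ) * ((10/αD)*(Lpm^2+L^2))) * ‖xt1 ω₀ - wt1 ω₀‖^2 := by
    intro ω₀
    have hsum : (∑ i, ∫ w2, ‖gt1 i (ω₀, w2) - gradient (fS i) (xt1 ω₀)‖ ^ 2 ∂(Measure.pi νc))
        ≤ ∑ i, ((1-αD/4) * ‖gt i ω₀ - gradient (fS i) (xt ω₀)‖^2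
          + (2/αD) * ‖gradient (fS i) (wt1 ω₀) - gradient (fS i) (xt ω₀)‖^2
          + (5/αD) * ‖gradient (fS i) (wt1 ω₀) - gradient (fS i) (xt1 ω₀)‖^2) :=
      Finset.sum_le_sum fun i _ => hstepB i ω₀
    rw [Finset.sum_add_distrib, Finset.sum_add_distrib, ← Finset.mul_sum, ← Finset.mul_sum,
      ← Finset.mul_sum] at hsum
    have hD := hDsum (wt1 ω₀) (xt ω₀)
    have hE := hDsum (wt1 ω₀) (xt1 ω₀)
    have hT : ‖wt1 ω₀ - xt ω₀‖^2 ≤ 2*‖xt1 ω₀ - xt ω₀‖^2 + 2*‖xt1 ω₀ - wt1 ω₀‖^2 := by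
      have h2 := young_norm (wt1 ω₀ - xt1 ω₀) (xt1 ω₀ - xt ω₀) one_pos
      rw [norm_sub_rev (wt1 ω₀) (xt1 ω₀), sub_add_sub_cancel] at h2
      norm_num at h2
      linarith
    have hW : ‖wt1 ω₀ - xt1 ω₀‖^2 = ‖xt1 ω₀ - wt1 ω₀‖^2 := by rw [norm_sub_rev]
    rw [hW] at hE
    have k2 : (0:ℝ) ≤ 2/αD := by positivity
    have k5 : (0:ℝ) ≤ 5/αD := by positivity
    have t1 := mul_le_mul_of_nonneg_left
      (hD.trans (mul_le_mul_of_nonneg_left (mul_le_mul_of_nonneg_left hT hA) hG.le)) k2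
    have t2 := mul_le_mul_of_nonneg_left hE k5
    have s1 : 0 ≤ (1/αD)*((Fintype.card ι:ℝ)*((Lpm^2+L^2)*‖xt1 ω₀ - xt ω₀‖^2)) := by positivity
    have s2 : 0 ≤ (1/αD)*((Fintype.card ι:ℝ)*((Lpm^2+L^2)*‖xt1 ω₀ - wt1 ω₀‖^2)) := by positivity
    simp only [div_eq_mul_inv] at hsum t1 t2 s1 s2 ⊢
    linarith [hsum, t1, t2, s1, s2]
  have hprod : ∀ i, (∫ w, ‖gt1 i w - gradient (fS i) (xt1 w.1)‖ ^ 2 ∂(μ₀.prod (Measure.pi νc)))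
      = ∫ ω₀, (∫ w2, ‖gt1 i (ω₀, w2) - gradient (fS i) (xt1 ω₀)‖ ^ 2 ∂(Measure.pi νc)) ∂μ₀ :=
    fun i => integral_prod _ (hint1 i)
  have hPint : Integrable
      (fun ω₀ => ∑ i, ∫ w2, ‖gt1 i (ω₀, w2) - gradient (fS i) (xt1 ω₀)‖ ^ 2 ∂(Measure.pi νc)) μ₀ :=
    integrable_finset_sum _ fun i _ => hΨint i
  have hGint : Integrable (fun ω₀ => ∑ i, ‖gt i ω₀ - gradient (fS i) (xt ω₀)‖^2) μ₀ :=
    integrable_finset_sum _ fun i _ => hint2 i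
  have hQint : Integrable (fun ω₀ => (1-αD/4) * ∑ i, ‖gt i ω₀ - gradient (fS i) (xt ω₀)‖^2
      + ((Fintype.card ι : ℝ) * ((8/αD)*(Lpm^2+L^2))) * ‖xt1 ω₀ - xt ω₀‖^2
      + ((Fintype.card ι : ℝ) * ((10/αD)*(Lpm^2+L^2))) * ‖xt1 ω₀ - wt1 ω₀‖^2) μ₀ :=
    ((hGint.const_mul _).add (hint3.const_mul _)).add (hint4.const_mul _)
  have hmono := integral_mono hPint hQint hkey
  have hQeq : (∫ ω₀, ((1-αD/4) * ∑ i, ‖gt i ω₀ - gradient (fS i) (xt ω₀)‖^2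
      + ((Fintype.card ι : ℝ) * ((8/αD)*(Lpm^2+L^2))) * ‖xt1 ω₀ - xt ω₀‖^2
      + ((Fintype.card ι : ℝ) * ((10/αD)*(Lpm^2+L^2))) * ‖xt1 ω₀ - wt1 ω₀‖^2) ∂μ₀)
      = (1-αD/4) * (∑ i, ∫ ω₀, ‖gt i ω₀ - gradient (fS i) (xt ω₀)‖^2 ∂μ₀)
        + ((Fintype.card ι : ℝ) * ((8/αD)*(Lpm^2+L^2))) * ∫ ω₀, ‖xt1 ω₀ - xt ω₀‖^2 ∂μ₀
        + ((Fintype.card ι : ℝ) * ((10/αD)*(Lpm^2+L^2))) * ∫ ω₀, ‖xt1 ω₀ - wt1 ω₀‖^2 ∂μ₀ := by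
    have hQ1 : Integrable (fun ω₀ => (1-αD/4) * ∑ i, ‖gt i ω₀ - gradient (fS i) (xt ω₀)‖^2
        + ((Fintype.card ι : ℝ) * ((8/αD)*(Lpm^2+L^2))) * ‖xt1 ω₀ - xt ω₀‖^2) μ₀ :=
      (hGint.const_mul ((1:ℝ)-αD/4)).add (hint3.const_mul ((Fintype.card ι : ℝ) * ((8/αD)*(Lpm^2+L^2))))
    rw [integral_add hQ1 (hint4.const_mul ((Fintype.card ι : ℝ) * ((10/αD)*(Lpm^2+L^2)))),
      integral_add (hGint.const_mul ((1:ℝ)-αD/4)) (hint3.const_mul ((Fintype.card ι : ℝ) * ((8/αD)*(Lpm^2+L^2)))),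
      integral_const_mul, integral_const_mul, integral_const_mul,
      integral_finset_sum _ fun i _ => hint2 i]
  have hPeq : (∫ ω₀, (∑ i, ∫ w2, ‖gt1 i (ω₀, w2) - gradient (fS i) (xt1 ω₀)‖ ^ 2
        ∂(Measure.pi νc)) ∂μ₀)
      = ∑ i, ∫ ω₀, (∫ w2, ‖gt1 i (ω₀, w2) - gradient (fS i) (xt1 ω₀)‖ ^ 2
        ∂(Measure.pi νc)) ∂μ₀ :=
    integral_finset_sum _ fun i _ => hΨint i
  calc (1 / (Fintype.card ι : ℝ)) *
        ∑ i, ∫ w, ‖gt1 i w - gradient (fS i) (xt1 w.1)‖ ^ 2 ∂(μ₀.prod (Measure.pi νc))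
      = (1 / (Fintype.card ι : ℝ)) * ∑ i, ∫ ω₀,
          (∫ w2, ‖gt1 i (ω₀, w2) - gradient (fS i) (xt1 ω₀)‖ ^ 2 ∂(Measure.pi νc)) ∂μ₀ := by
        rw [Finset.sum_congr rfl fun i _ => hprod i]
    _ = (1 / (Fintype.card ι : ℝ)) * ∫ ω₀,
          (∑ i, ∫ w2, ‖gt1 i (ω₀, w2) - gradient (fS i) (xt1 ω₀)‖ ^ 2 ∂(Measure.pi νc)) ∂μ₀ := by
        rw [hPeq]
    _ ≤ (1 / (Fintype.card ι : ℝ)) * ∫ ω₀, ((1-αD/4) * ∑ i, ‖gt i ω₀ - gradient (fS i) (xt ω₀)‖^2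
          + ((Fintype.card ι : ℝ) * ((8/αD)*(Lpm^2+L^2))) * ‖xt1 ω₀ - xt ω₀‖^2
          + ((Fintype.card ι : ℝ) * ((10/αD)*(Lpm^2+L^2))) * ‖xt1 ω₀ - wt1 ω₀‖^2) ∂μ₀ := by
        exact mul_le_mul_of_nonneg_left hmono (by positivity)
    _ ≤ (1 - αD / 4) * ((1 / (Fintype.card ι : ℝ)) *
            ∑ i, ∫ ω₀, ‖gt i ω₀ - gradient (fS i) (xt ω₀)‖ ^ 2 ∂μ₀)
        + (8 / αD) * (Lpm ^ 2 + L ^ 2) * ∫ ω₀, ‖xt1 ω₀ - xt ω₀‖ ^ 2 ∂μ₀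
        + (10 / αD) * (Lpm ^ 2 + L ^ 2) * ∫ ω₀, ‖xt1 ω₀ - wt1 ω₀‖ ^ 2 ∂μ₀ := by
        rw [hQeq]
        rw [mul_add, mul_add]
        apply le_of_eq
        field_simp
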